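/- Let b = ∑_{i=1}^{2n} e_{i+1,i}, β = ½(e_{1,2n} + e_{2,2n+1}), and J_B = b + λβ (a matrix with polynomial entries in an indeterminate λ). Then J_B^{2n+1} = λ J_B. -/

import Mathlib

set_option maxHeartbeats 1000000

open Matrix Polynomial

/-- `b = ∑_{i=1}^{2n} e_{i+1,i}` (the subdiagonal matrix), over `ℝ[λ]`. -/
noncomputable def bmat (n : ℕ) : Matrix (Fin (2*n+1)) (Fin (2*n+1)) (Polynomial ℝ) :=
  fun i j => if i.val = j.val + 1 then 1 else 0

/-- `β = ½(e_{1,2n} + e_{2,2n+1})`, over `ℝ[λ]`. -/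
noncomputable def betamat (n : ℕ) : Matrix (Fin (2*n+1)) (Fin (2*n+1)) (Polynomial ℝ) :=
  fun i j => if (i.val = 0 ∧ j.val + 2 = 2*n+1) ∨ (i.val = 1 ∧ j.val + 1 = 2*n+1)
    then Polynomial.C (1/2 : ℝ) else 0

noncomputable def Mk (n k : ℕ) : Matrix (Fin (2*n+1)) (Fin (2*n+1)) (Polynomial ℝ) :=
  fun i j =>
    if j.val = 2*n then
      C (1/2) * X * (if i.val = k then 1 else 0)
        + C (1/2) * X * (C (1/2) * X) * (if i.val = 0 ∧ k = 2*n then 1 else 0)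
    else
      (if i.val = j.val + k then 1 else 0)
      + C (1/2) * X * (if i.val = 0 ∧ j.val + k = 2*n then 1 else 0)
      + X * (if i.val + 2*n = j.val + k ∧ 0 < i.val then 1 else 0)

lemma hhalf : (C (1/2 : ℝ) : Polynomial ℝ) + C (1/2 : ℝ) = 1 := by
  rw [← C_add]; norm_num

lemma sum_single {m : ℕ} (g : Fin m → Polynomial ℝ) (t : ℕ) :
    ∑ l : Fin m, (if l.val = t then g l else 0) = if h : t < m then g ⟨t, h⟩ else 0 := by
  by_cases h : t < m
  · rw [dif_pos h, Finset.sum_eq_single ⟨t, h⟩]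
    · simp
    · intro b _ hb
      rw [if_neg]
      intro hc
      exact hb (Fin.ext hc)
    · simp
  · rw [dif_neg h]
    apply Finset.sum_eq_zero
    intro l _
    rw [if_neg]
    omega

lemma Jentry (n : ℕ) (l j : Fin (2*n+1)) :
    (bmat n + (X : Polynomial ℝ) • betamat n) l j
      = (if l.val = j.val + 1 then 1 else 0)
        + (if l.val = 0 ∧ j.val + 2 = 2*n+1 then C (1/2 : ℝ) * X else 0)
        + (if l.val = 1 ∧ j.val + 1 = 2*n+1 then C (1/2 : ℝ) * X else 0) := by
  simp only [Matrix.add_apply, Matrix.smul_apply, bmat, betamat, smul_eq_mul]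
  split_ifs <;> first | ring1 | omega | (exfalso; omega) | linear_combination X * hhalf | linear_combination X^2 * hhalf | linear_combination (C (1/2:ℝ) * X^2) * hhalf

lemma mul_J (n : ℕ) (hn : 1 ≤ n) (A : Matrix (Fin (2*n+1)) (Fin (2*n+1)) (Polynomial ℝ))
    (i j : Fin (2*n+1)) :
    (A * (bmat n + (X : Polynomial ℝ) • betamat n)) i j =
      (if h : j.val + 1 < 2*n+1 then A i ⟨j.val+1, h⟩ else 0)
      + C (1/2 : ℝ) * X * (if j.val + 2 = 2*n+1 then A i ⟨0, by omega⟩ else 0)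
      + C (1/2 : ℝ) * X * (if j.val + 1 = 2*n+1 then A i ⟨1, by omega⟩ else 0) := by
  rw [Matrix.mul_apply]
  have : ∀ l : Fin (2*n+1), A i l * (bmat n + (X : Polynomial ℝ) • betamat n) l j
      = (if l.val = j.val + 1 then A i l else 0)
        + ((if l.val = 0 then (if j.val + 2 = 2*n+1 then A i l * (C (1/2:ℝ) * X) else 0) else 0)
        + (if l.val = 1 then (if j.val + 1 = 2*n+1 then A i l * (C (1/2:ℝ) * X) else 0) else 0)) := by
    intro l
    rw [Jentry]
    split_ifs <;> first | ring1 | omega | (exfalso; omega) | linear_combination X * hhalf | linear_combination X^2 * hhalf | linear_combination (C (1/2:ℝ) * X^2) * hhalf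
  rw [Finset.sum_congr rfl (fun l _ => this l), Finset.sum_add_distrib,
    Finset.sum_add_distrib, sum_single, sum_single, sum_single]
  rw [dif_pos (by omega : 0 < 2*n+1), dif_pos (by omega : 1 < 2*n+1)]
  by_cases h2 : j.val + 2 = 2*n+1 <;> by_cases h1 : j.val + 1 = 2*n+1 <;>
    simp [h1, h2] <;> first | ring1 | omega | (exfalso; omega) | (split_ifs <;> first | ring1 | (exfalso; omega))

lemma Mk_one (n : ℕ) (hn : 1 ≤ n) :
    Mk n 1 = bmat n + (X : Polynomial ℝ) • betamat n := by
  refine Matrix.ext fun i j => ?_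
  rw [Jentry]
  simp only [Mk, and_true]
  split_ifs <;> first | ring1 | omega | (exfalso; omega) | linear_combination X * hhalf | linear_combination X^2 * hhalf | linear_combination (C (1/2:ℝ) * X^2) * hhalf

lemma Mk_step (n k : ℕ) (hn : 1 ≤ n) (hk1 : 1 ≤ k) (hk : k + 1 ≤ 2*n) :
    Mk n k * (bmat n + (X : Polynomial ℝ) • betamat n) = Mk n (k+1) := by
  refine Matrix.ext fun i j => ?_
  rw [mul_J n hn]
  rcases Nat.lt_or_ge (j:ℕ) (2*n-1) with hj | hj
  · -- j ≤ 2n-2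
    rw [dif_pos (show (j:ℕ)+1 < 2*n+1 by omega), if_neg (by omega), if_neg (by omega)]
    simp only [Mk, and_true]
    split_ifs <;> first | ring1 | omega | (exfalso; omega) | linear_combination X * hhalf | linear_combination X^2 * hhalf | linear_combination (C (1/2:ℝ) * X^2) * hhalf
  · rcases Nat.lt_or_ge (j:ℕ) (2*n) with hj2 | hj2
    · -- j = 2n-1
      have hj' : (j:ℕ) + 1 = 2*n := by omega
      rw [dif_pos (show (j:ℕ)+1 < 2*n+1 by omega), if_pos (by omega), if_neg (by omega)]
      simp only [Mk, and_true]
      split_ifs <;> first | ring1 | omega | (exfalso; omega) | linear_combination X * hhalf | linear_combination X^2 * hhalf | linear_combination (C (1/2:ℝ) * X^2) * hhalf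
    · -- j = 2n
      have hj' : (j:ℕ) = 2*n := by omega
      rw [dif_neg (by omega), if_neg (by omega), if_pos (by omega)]
      simp only [Mk, and_true]
      split_ifs <;> first | ring1 | omega | (exfalso; omega) | linear_combination X * hhalf | linear_combination X^2 * hhalf | linear_combination (C (1/2:ℝ) * X^2) * hhalf

lemma Mk_top (n : ℕ) (hn : 1 ≤ n) :
    Mk n (2*n) * (bmat n + (X : Polynomial ℝ) • betamat n)
      = (X : Polynomial ℝ) • (bmat n + (X : Polynomial ℝ) • betamat n) := by
  refine Matrix.ext fun i j => ?_
  rw [mul_J n hn]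
  rw [Matrix.smul_apply, Jentry]
  rcases Nat.lt_or_ge (j:ℕ) (2*n-1) with hj | hj
  · rw [dif_pos (show (j:ℕ)+1 < 2*n+1 by omega), if_neg (by omega), if_neg (by omega)]
    simp only [Mk, smul_eq_mul, and_true]
    split_ifs <;> first | ring1 | omega | (exfalso; omega) | linear_combination X * hhalf | linear_combination X^2 * hhalf | linear_combination (C (1/2:ℝ) * X^2) * hhalf
  · rcases Nat.lt_or_ge (j:ℕ) (2*n) with hj2 | hj2
    · have hj' : (j:ℕ) + 1 = 2*n := by omega
      rw [dif_pos (show (j:ℕ)+1 < 2*n+1 by omega), if_pos (by omega), if_neg (by omega)]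
      simp only [Mk, smul_eq_mul, and_true]
      split_ifs <;> first | ring1 | omega | (exfalso; omega) | linear_combination X * hhalf | linear_combination X^2 * hhalf | linear_combination (C (1/2:ℝ) * X^2) * hhalf
    · have hj' : (j:ℕ) = 2*n := by omega
      rw [dif_neg (by omega), if_neg (by omega), if_pos (by omega)]
      simp only [Mk, smul_eq_mul, and_true]
      split_ifs <;> first | ring1 | omega | (exfalso; omega) | linear_combination X * hhalf | linear_combination X^2 * hhalf | linear_combination (C (1/2:ℝ) * X^2) * hhalf

theorem stmt15 (n : ℕ) (hn : 1 ≤ n) :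
    (bmat n + (Polynomial.X : Polynomial ℝ) • betamat n)^(2*n+1)
      = (Polynomial.X : Polynomial ℝ) • (bmat n + (Polynomial.X : Polynomial ℝ) • betamat n) := by
  have key : ∀ k, 1 ≤ k → k ≤ 2*n →
      (bmat n + (Polynomial.X : Polynomial ℝ) • betamat n)^k = Mk n k := by
    intro k
    induction k with
    | zero => omega
    | succ m ih =>
      intro _ hle
      rcases Nat.eq_or_lt_of_le (show 1 ≤ m + 1 from by omega) with h | h
      · rw [← h, pow_one, Mk_one n hn]
      · have hm1 : 1 ≤ m := by omega
        rw [pow_succ, ih hm1 (by omega), Mk_step n m hn hm1 hle]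
  rw [pow_succ, key (2*n) (by omega) le_rfl, Mk_top n hn]
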